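/- Every degree-0 derivation of m (a derivation D of the Lie algebra m with D(m_p) ⊆ m_p for every weight p) is of the form a·(ad_g H)|_m + b·(ad_g E)|_m for unique real numbers a and b; in particular, the space of degree-0 derivations of m is 2-dimensional. -/

import Mathlib

noncomputable section

open scoped BigOperators

/-- The underlying vector space of `gl₂(ℝ)`, with basis `Y, H, E, X` at indices `0,1,2,3`. -/
abbrev G2 : Type := Fin 4 → ℝ

/-- The underlying vector space of the Heisenberg algebra `heis_{2n-5}`:
coefficients of `ε_1, …, ε_{2n-6}` together with the coefficient of `η`. -/
abbrev Hs (n : ℕ) : Type := (Fin (2*n-6) → ℝ) × ℝ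

/-- The underlying vector space of `g = gl₂(ℝ) ⋉ heis_{2n-5}`. -/
abbrev Gg (n : ℕ) : Type := G2 × Hs n

/-- The basis vector `ε_p` (1-based index `p`). -/
def epsV (n : ℕ) (p : ℕ) : Hs n := (fun i => if i.val + 1 = p then 1 else 0, 0)

/-- The central basis vector `η`. -/
def etaV (n : ℕ) : Hs n := (0, 1)

/-- The Heisenberg bracket, encoding `[ε_i, ε_{2n-5-i}] = (-1)^i η`. -/
def heisBr (n : ℕ) (x y : Hs n) : Hs n :=
  (0, ∑ i : Fin (2*n-6), (-1 : ℝ)^(i.val+1) * x.1 i * y.1 i.rev)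

/-- The `gl₂(ℝ)` bracket: `[X,Y]=H`, `[H,X]=2X`, `[H,Y]=-2Y`, and `E` is central. -/
def gl2Br (a b : G2) : G2 :=
  ![-2*(a 1 * b 0 - a 0 * b 1), a 3 * b 0 - a 0 * b 3, 0, 2*(a 1 * b 3 - a 3 * b 1)]

/-- The map `φ : gl₂(ℝ) → End(heis_{2n-5})` from the paper. -/
def phi (n : ℕ) (a : G2) (v : Hs n) : Hs n :=
  (fun i =>
      a 1 * (2*(i.val:ℝ) + 7 - 2*(n:ℝ)) * v.1 i
    + a 2 * v.1 i
    + a 3 * (if h : 0 < i.val then v.1 ⟨i.val - 1, by have := i.isLt; omega⟩ else 0)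
    + a 0 * (((i.val:ℝ)+1) * (2*(n:ℝ) - 7 - (i.val:ℝ))) *
        (if h : i.val + 1 < 2*n-6 then v.1 ⟨i.val+1, h⟩ else 0),
   2 * a 2 * v.2)

/-- The bracket of the semidirect product `g = gl₂(ℝ) ⋉_φ heis_{2n-5}`. -/
def gBr (n : ℕ) (x y : Gg n) : Gg n :=
  (gl2Br x.1 y.1, phi n x.1 y.2 - phi n y.1 x.2 + heisBr n x.2 y.2)

def bY (n : ℕ) : Gg n := (![1,0,0,0], 0)
def bH (n : ℕ) : Gg n := (![0,1,0,0], 0)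
def bE (n : ℕ) : Gg n := (![0,0,1,0], 0)
def bX (n : ℕ) : Gg n := (![0,0,0,1], 0)
def bEps (n : ℕ) (p : ℕ) : Gg n := (0, epsV n p)
def bEta (n : ℕ) : Gg n := (0, etaV n)

/-- The weight-`w` graded component of `g` in the grading of `s^{k,n}`: the span of the
basis elements of weight `w`, where `wght Y = 1`, `wght H = wght E = 0`, `wght X = -1`,
`wght ε_p = n-4-k-p`, `wght η = -3-2k`. -/
def gComp (n k : ℕ) (w : ℤ) : Submodule ℝ (Gg n) :=
  Submodule.span ℝ {v : Gg n |
    (v = bY n ∧ w = 1) ∨ ((v = bH n ∨ v = bE n) ∧ w = 0) ∨ (v = bX n ∧ w = -1) ∨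
    (∃ p : ℕ, 1 ≤ p ∧ p ≤ 2*n-6 ∧ v = bEps n p ∧ w = (n:ℤ) - 4 - (k:ℤ) - (p:ℤ)) ∨
    (v = bEta n ∧ w = -3 - 2*(k:ℤ))}

/-- The negative part `m = s^{k,n}` of `g` (for `0 ≤ k ≤ n-4`): the span of the basis
elements of negative weight, i.e. of `X`, `ε_p` for `n-3-k ≤ p ≤ 2n-6`, and `η`. -/
def mSub (n k : ℕ) : Submodule ℝ (Gg n) where
  carrier := {x | x.1 0 = 0 ∧ x.1 1 = 0 ∧ x.1 2 = 0 ∧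
    ∀ i : Fin (2*n-6), ((i.val:ℤ) + 1 < (n:ℤ) - 3 - (k:ℤ) → x.2.1 i = 0)}
  add_mem' := by
    rintro a b ⟨ha0, ha1, ha2, ha3⟩ ⟨hb0, hb1, hb2, hb3⟩
    exact ⟨by simp [ha0, hb0], by simp [ha1, hb1], by simp [ha2, hb2],
      fun i hi => by simp [ha3 i hi, hb3 i hi]⟩
  zero_mem' := ⟨rfl, rfl, rfl, fun i _ => rfl⟩
  smul_mem' := by
    rintro c a ⟨ha0, ha1, ha2, ha3⟩
    exact ⟨by simp [ha0], by simp [ha1], by simp [ha2], fun i hi => by simp [ha3 i hi]⟩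

/-- The non-negative part `g⁰` of `g` in the grading of `s^{k,n}`. -/
def g0Sub (n k : ℕ) : Submodule ℝ (Gg n) where
  carrier := {x | x.1 3 = 0 ∧ x.2.2 = 0 ∧
    ∀ i : Fin (2*n-6), ((n:ℤ) - 3 - (k:ℤ) ≤ (i.val:ℤ) + 1 → x.2.1 i = 0)}
  add_mem' := by
    rintro a b ⟨ha0, ha1, ha3⟩ ⟨hb0, hb1, hb3⟩
    exact ⟨by simp [ha0, hb0], by simp [ha1, hb1], fun i hi => by simp [ha3 i hi, hb3 i hi]⟩
  zero_mem' := ⟨rfl, rfl, fun i _ => rfl⟩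
  smul_mem' := by
    rintro c a ⟨ha0, ha1, ha3⟩
    exact ⟨by simp [ha0], by simp [ha1], fun i hi => by simp [ha3 i hi]⟩

/-- The negative part `m` of `g`, as a type. -/
abbrev MT (n k : ℕ) := ↥(mSub n k)

/-- The projection `π_m : g → m` along `g⁰`. -/
def Pm (n k : ℕ) (x : Gg n) : Gg n :=
  (![0, 0, 0, x.1 3],
   (fun i => if (n:ℤ) - 3 - (k:ℤ) ≤ (i.val:ℤ) + 1 then x.2.1 i else 0, x.2.2))

lemma Pm_mem (n k : ℕ) (x : Gg n) : Pm n k x ∈ mSub n k := by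
  refine ⟨?_, ?_, ?_, fun i hi => ?_⟩
  · simp [Pm]
  · simp [Pm]
  · simp [Pm]
  · show (if (n:ℤ) - 3 - (k:ℤ) ≤ (i.val:ℤ) + 1 then x.2.1 i else 0) = 0
    rw [if_neg (by omega)]

/-- The projection `π_m : g → m`, viewed as a map into `m`. -/
def ptoM (n k : ℕ) (x : Gg n) : MT n k := ⟨Pm n k x, Pm_mem n k x⟩

/-- The Lie bracket of `m` (the bracket of `g` restricted to `m`; since `m` is closed
under the bracket, composing with the projection `π_m` does not change the value). -/
def mBrM (n k : ℕ) (x y : MT n k) : MT n k := ptoM n k (gBr n x.1 y.1)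

/-- `ψ` is an ℝ-linear map `m → g`, i.e. an element of `C¹(m,g)`. -/
def IsLin1 (n k : ℕ) (ψ : MT n k → Gg n) : Prop :=
  (∀ x y, ψ (x + y) = ψ x + ψ y) ∧ ∀ (c : ℝ) (x), ψ (c • x) = c • ψ x

/-- `ψ` is an alternating ℝ-bilinear map `m × m → g`, i.e. an element of `C²(m,g)`. -/
def IsAlt2 (n k : ℕ) (ψ : MT n k → MT n k → Gg n) : Prop :=
  (∀ y, IsLin1 n k (fun x => ψ x y)) ∧ (∀ x, IsLin1 n k (ψ x)) ∧ ∀ x, ψ x x = 0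

/-- The coboundary `∂ : C¹(m,g) → C²(m,g)`,
`(∂φ)(x,y) = [x, φ y] - [y, φ x] + φ [x,y]`. -/
def cobound (n k : ℕ) (φ : MT n k → Gg n) : MT n k → MT n k → Gg n :=
  fun x y => gBr n x.1 (φ y) - gBr n y.1 (φ x) + φ (mBrM n k x y)

/-- A 1-cochain is homogeneous of weight `w` if `ψ(g_p) ⊆ g_{p+w}` for all `p < 0`. -/
def Homog1 (n k : ℕ) (w : ℤ) (ψ : MT n k → Gg n) : Prop :=
  ∀ p : ℤ, p < 0 → ∀ x : MT n k, (x : Gg n) ∈ gComp n k p → ψ x ∈ gComp n k (p + w)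

/-- A 2-cochain is homogeneous of weight `w` if `ψ(g_p × g_q) ⊆ g_{p+q+w}` for `p,q < 0`. -/
def Homog2 (n k : ℕ) (w : ℤ) (ψ : MT n k → MT n k → Gg n) : Prop :=
  ∀ p q : ℤ, p < 0 → q < 0 → ∀ x y : MT n k,
    (x : Gg n) ∈ gComp n k p → (y : Gg n) ∈ gComp n k q → ψ x y ∈ gComp n k (p + q + w)

/-- `C¹₊(m,g)`: the span of the homogeneous 1-cochains of positive weight. -/
def C1plus (n k : ℕ) : Submodule ℝ (MT n k → Gg n) :=
  Submodule.span ℝ {ψ | IsLin1 n k ψ ∧ ∃ w : ℤ, 0 < w ∧ Homog1 n k w ψ}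

/-- `C²₊(m,g)`: the span of the homogeneous alternating 2-cochains of positive weight. -/
def C2plus (n k : ℕ) : Submodule ℝ (MT n k → MT n k → Gg n) :=
  Submodule.span ℝ {ψ | IsAlt2 n k ψ ∧ ∃ w : ℤ, 0 < w ∧ Homog2 n k w ψ}

/-- The image `∂(C¹₊(m,g)) ⊆ C²(m,g)`. -/
def imDel (n k : ℕ) : Submodule ℝ (MT n k → MT n k → Gg n) :=
  Submodule.span ℝ (cobound n k '' {φ | φ ∈ C1plus n k})

/-- The action of `A ∈ g⁰` on 1-cochains: `(A·ψ)(x) = [A, ψ x] - ψ(π_m [A, x])`. -/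
def act1 (n k : ℕ) (A : Gg n) (ψ : MT n k → Gg n) : MT n k → Gg n :=
  fun x => gBr n A (ψ x) - ψ (ptoM n k (gBr n A x.1))

/-- The action of `A ∈ g⁰` on 2-cochains:
`(A·ψ)(x,y) = [A, ψ x y] - ψ(π_m [A, x]) y - ψ x (π_m [A, y])`. -/
def act2 (n k : ℕ) (A : Gg n) (ψ : MT n k → MT n k → Gg n) : MT n k → MT n k → Gg n :=
  fun x y => gBr n A (ψ x y) - ψ (ptoM n k (gBr n A x.1)) y - ψ x (ptoM n k (gBr n A y.1))

/-- The coefficient of `ε_p` (the dual functional `ε*_p`). -/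
def epsCoef (n : ℕ) (p : ℕ) (x : Gg n) : ℝ :=
  if h : 1 ≤ p ∧ p ≤ 2*n-6 then x.2.1 ⟨p-1, by omega⟩ else 0

/-- The 1-cochain `ε*_{n-3-k} ⊗ ε_{2n-6}`. -/
def cA (n k : ℕ) : MT n k → Gg n := fun x => epsCoef n (n-3-k) x.1 • bEps n (2*n-6)

/-- The 1-cochain `X* ⊗ ε_{n-4-k}`. -/
def cB (n k : ℕ) : MT n k → Gg n := fun x => (x : Gg n).1 3 • bEps n (n-4-k)

/-- The 2-cochain `X* ∧ ε*_{n-1+k} ⊗ η`. -/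
def cC (n k : ℕ) : MT n k → MT n k → Gg n := fun x y =>
  ((x : Gg n).1 3 * epsCoef n (n-1+k) y.1 - (y : Gg n).1 3 * epsCoef n (n-1+k) x.1) • bEta n

/-- The 2-cochain `ε*_{n-3-k} ∧ η* ⊗ ε_{2n-6}`. -/
def cD (n k : ℕ) : MT n k → MT n k → Gg n := fun x y =>
  (epsCoef n (n-3-k) x.1 * (y : Gg n).2.2 - epsCoef n (n-3-k) y.1 * (x : Gg n).2.2) • bEps n (2*n-6)

/-- `D : m → m` is an ℝ-linear map. -/
def IsLinM (n k : ℕ) (D : MT n k → MT n k) : Prop :=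
  (∀ x y, D (x + y) = D x + D y) ∧ ∀ (c : ℝ) (x), D (c • x) = c • D x

section Aux

variable (n : ℕ)

lemma mem_mSub_of (x : Gg n) (h0 : x.1 0 = 0) (h1 : x.1 1 = 0) (h2 : x.1 2 = 0) :
    x ∈ mSub n (n-4) :=
  ⟨h0, h1, h2, fun i hi => absurd hi (by omega)⟩

def mX : MT n (n-4) := ⟨bX n, mem_mSub_of n _ rfl rfl rfl⟩
def mEps (p : ℕ) : MT n (n-4) := ⟨bEps n p, mem_mSub_of n _ rfl rfl rfl⟩
def mEta : MT n (n-4) := ⟨bEta n, mem_mSub_of n _ rfl rfl rfl⟩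

lemma bEps_eq_zero (p : ℕ) (hp : 2*n-6 < p) : bEps n p = 0 := by
  unfold bEps epsV
  refine Prod.ext rfl (Prod.ext (funext fun i => ?_) rfl)
  show (if i.val + 1 = p then (1:ℝ) else 0) = 0
  rw [if_neg (by have := i.isLt; omega)]

lemma bX_mem : bX n ∈ gComp n (n-4) (-1) :=
  Submodule.subset_span (Or.inr (Or.inr (Or.inl ⟨rfl, rfl⟩)))

lemma bEps_mem (hn : 6 ≤ n) (p : ℕ) (hp1 : 1 ≤ p) (hp2 : p ≤ 2*n-6) :
    bEps n p ∈ gComp n (n-4) (-(p:ℤ)) :=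
  Submodule.subset_span (Or.inr (Or.inr (Or.inr (Or.inl ⟨p, hp1, hp2, rfl, by omega⟩))))

lemma bEta_mem (hn : 6 ≤ n) : bEta n ∈ gComp n (n-4) (5 - 2*(n:ℤ)) :=
  Submodule.subset_span (Or.inr (Or.inr (Or.inr (Or.inr ⟨rfl, by omega⟩))))

lemma comp_coords (hn : 6 ≤ n) (w : ℤ) (hw : w < 0) (v : Gg n)
    (hv : v ∈ gComp n (n-4) w) :
    v.1 0 = 0 ∧ v.1 1 = 0 ∧ v.1 2 = 0 ∧ (w ≠ -1 → v.1 3 = 0) ∧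
      (∀ i : Fin (2*n-6), ((i.val:ℤ) + 1 ≠ -w → v.2.1 i = 0)) ∧
      (w ≠ 5 - 2*(n:ℤ) → v.2.2 = 0) := by
  induction hv using Submodule.span_induction with
  | mem x hx =>
    rcases hx with ⟨rfl, hw1⟩ | ⟨hx, hw0⟩ | ⟨rfl, hw1⟩ | ⟨p, hp1, hp2, rfl, hwp⟩ | ⟨rfl, hwe⟩
    · exact absurd hw1 (by omega)
    · exact absurd hw0 (by omega)
    · exact ⟨rfl, rfl, rfl, fun h => absurd hw1 h, fun i _ => rfl, fun _ => rfl⟩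
    · refine ⟨rfl, rfl, rfl, fun _ => rfl, fun i hi => ?_, fun _ => rfl⟩
      show (if i.val + 1 = p then (1:ℝ) else 0) = 0
      rw [if_neg (by omega)]
    · exact ⟨rfl, rfl, rfl, fun _ => rfl, fun i _ => rfl,
        fun h => absurd (show w = 5 - 2*(n:ℤ) by omega) h⟩
  | zero => exact ⟨rfl, rfl, rfl, fun _ => rfl, fun i _ => rfl, fun _ => rfl⟩
  | add x y hx hy ihx ihy =>
    obtain ⟨a0,a1,a2,a3,a4,a5⟩ := ihx; obtain ⟨b0,b1,b2,b3,b4,b5⟩ := ihy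
    exact ⟨by simp [a0,b0], by simp [a1,b1], by simp [a2,b2],
      fun h => by simp [a3 h, b3 h],
      fun i hi => by simp [a4 i hi, b4 i hi], fun h => by simp [a5 h, b5 h]⟩
  | smul c x hx ih =>
    obtain ⟨a0,a1,a2,a3,a4,a5⟩ := ih
    exact ⟨by simp [a0], by simp [a1], by simp [a2], fun h => by simp [a3 h],
      fun i hi => by simp [a4 i hi], fun h => by simp [a5 h]⟩

lemma epsCoef_val (p : ℕ) (hp1 : 1 ≤ p) (hp2 : p ≤ 2*n-6) (x : Gg n) (h : p - 1 < 2*n-6) :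
    epsCoef n p x = x.2.1 ⟨p-1, h⟩ := by
  unfold epsCoef
  rw [dif_pos ⟨hp1, hp2⟩]

lemma extract_eps (hn : 6 ≤ n) (p : ℕ) (hp1 : 2 ≤ p) (hp2 : p ≤ 2*n-6) (v : Gg n)
    (hv : v ∈ gComp n (n-4) (-(p:ℤ))) :
    v = epsCoef n p v • bEps n p := by
  obtain ⟨a0,a1,a2,a3,a4,a5⟩ := comp_coords n hn _ (by omega) v hv
  rw [epsCoef_val n p (by omega) hp2 v (by omega)]
  refine Prod.ext (funext fun j => ?_) (Prod.ext (funext fun i => ?_) ?_)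
  · show v.1 j = _ * 0
    rw [mul_zero]
    fin_cases j
    · exact a0
    · exact a1
    · exact a2
    · exact a3 (by omega)
  · show v.2.1 i = v.2.1 ⟨p-1, by omega⟩ * (if i.val + 1 = p then 1 else 0)
    by_cases h : i.val + 1 = p
    · have hi : i = ⟨p-1, by omega⟩ := Fin.ext (show i.val = p-1 by omega)
      rw [if_pos h, mul_one, hi]
    · rw [a4 i (by omega), if_neg h, mul_zero]
  · show v.2.2 = _ * 0
    rw [a5 (by omega), mul_zero]

lemma extract_neg1 (hn : 6 ≤ n) (v : Gg n) (hv : v ∈ gComp n (n-4) (-1)) :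
    v = v.1 3 • bX n + epsCoef n 1 v • bEps n 1 := by
  obtain ⟨a0,a1,a2,a3,a4,a5⟩ := comp_coords n hn _ (by omega) v hv
  rw [epsCoef_val n 1 (by omega) (by omega) v (by omega)]
  refine Prod.ext (funext fun j => ?_) (Prod.ext (funext fun i => ?_) ?_)
  · show v.1 j = v.1 3 * (![0,0,0,1] j) + _ * 0
    rw [mul_zero, add_zero]
    fin_cases j
    · simpa using a0
    · simpa using a1
    · simpa using a2
    · simp
  · show v.2.1 i = v.1 3 * 0 + v.2.1 ⟨1-1, by omega⟩ * (if i.val + 1 = 1 then 1 else 0)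
    rw [mul_zero, zero_add]
    by_cases h : i.val + 1 = 1
    · have hi : i = ⟨1-1, by omega⟩ := Fin.ext (show i.val = 1-1 by omega)
      rw [if_pos h, mul_one, hi]
    · rw [a4 i (by omega), if_neg h, mul_zero]
  · show v.2.2 = v.1 3 * 0 + _ * 0
    rw [a5 (by omega), mul_zero, mul_zero, add_zero]

lemma extract_eta (hn : 6 ≤ n) (v : Gg n) (hv : v ∈ gComp n (n-4) (5 - 2*(n:ℤ))) :
    v = v.2.2 • bEta n := by
  obtain ⟨a0,a1,a2,a3,a4,a5⟩ := comp_coords n hn _ (by omega) v hv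
  refine Prod.ext (funext fun j => ?_) (Prod.ext (funext fun i => ?_) ?_)
  · show v.1 j = _ * 0
    rw [mul_zero]
    fin_cases j
    · exact a0
    · exact a1
    · exact a2
    · exact a3 (by omega)
  · show v.2.1 i = v.2.2 * 0
    rw [a4 i (by have := i.isLt; omega), mul_zero]
  · show v.2.2 = v.2.2 * 1
    rw [mul_one]

end Aux
section Aux2

variable (n : ℕ)

lemma gl2Br_smul_left (c : ℝ) (a b : G2) : gl2Br (c • a) b = c • gl2Br a b := by
  funext j; fin_cases j <;> simp [gl2Br] <;> ring
lemma gl2Br_smul_right (c : ℝ) (a b : G2) : gl2Br a (c • b) = c • gl2Br a b := by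
  funext j; fin_cases j <;> simp [gl2Br] <;> ring
lemma gl2Br_add_left (a a' b : G2) : gl2Br (a + a') b = gl2Br a b + gl2Br a' b := by
  funext j; fin_cases j <;> simp [gl2Br] <;> ring
lemma gl2Br_add_right (a b b' : G2) : gl2Br a (b + b') = gl2Br a b + gl2Br a b' := by
  funext j; fin_cases j <;> simp [gl2Br] <;> ring

lemma phi_smul_right (c : ℝ) (a : G2) (v : Hs n) : phi n a (c • v) = c • phi n a v := by
  unfold phi
  refine Prod.ext (funext fun i => ?_) ?_
  · simp only [Prod.smul_mk, Prod.smul_fst, Pi.smul_apply, smul_eq_mul]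
    split_ifs <;> ring
  · simp only [Prod.smul_mk, Prod.smul_snd, smul_eq_mul]
    ring
lemma phi_smul_left (c : ℝ) (a : G2) (v : Hs n) : phi n (c • a) v = c • phi n a v := by
  unfold phi
  refine Prod.ext (funext fun i => ?_) ?_
  · simp only [Prod.smul_mk, Prod.smul_fst, Pi.smul_apply, smul_eq_mul]
    split_ifs <;> ring
  · simp only [Prod.smul_mk, Prod.smul_snd, Pi.smul_apply, smul_eq_mul]
    ring
lemma phi_add_right (a : G2) (v w : Hs n) : phi n a (v + w) = phi n a v + phi n a w := by
  unfold phi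
  refine Prod.ext (funext fun i => ?_) ?_
  · simp only [Prod.mk_add_mk, Prod.fst_add, Pi.add_apply]
    split_ifs <;> ring
  · simp only [Prod.mk_add_mk, Prod.snd_add]
    ring
lemma phi_add_left (a a' : G2) (v : Hs n) : phi n (a + a') v = phi n a v + phi n a' v := by
  unfold phi
  refine Prod.ext (funext fun i => ?_) ?_
  · simp only [Prod.mk_add_mk, Prod.fst_add, Pi.add_apply]
    split_ifs <;> ring
  · simp only [Prod.mk_add_mk, Prod.snd_add, Pi.add_apply]
    ring

lemma heisBr_smul_left (c : ℝ) (x y : Hs n) : heisBr n (c • x) y = c • heisBr n x y := by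
  unfold heisBr
  refine Prod.ext (by simp) ?_
  simp only [Prod.smul_mk, Prod.smul_fst, Prod.smul_snd, Pi.smul_apply, smul_eq_mul,
    Finset.mul_sum]
  exact Finset.sum_congr rfl fun i _ => by ring
lemma heisBr_smul_right (c : ℝ) (x y : Hs n) : heisBr n x (c • y) = c • heisBr n x y := by
  unfold heisBr
  refine Prod.ext (by simp) ?_
  simp only [Prod.smul_mk, Prod.smul_fst, Prod.smul_snd, Pi.smul_apply, smul_eq_mul,
    Finset.mul_sum]
  exact Finset.sum_congr rfl fun i _ => by ring
lemma heisBr_add_left (x x' y : Hs n) : heisBr n (x + x') y = heisBr n x y + heisBr n x' y := by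
  unfold heisBr
  refine Prod.ext (by simp) ?_
  simp only [Prod.mk_add_mk, Prod.fst_add, Prod.snd_add, Pi.add_apply,
    ← Finset.sum_add_distrib]
  exact Finset.sum_congr rfl fun i _ => by ring
lemma heisBr_add_right (x y y' : Hs n) : heisBr n x (y + y') = heisBr n x y + heisBr n x y' := by
  unfold heisBr
  refine Prod.ext (by simp) ?_
  simp only [Prod.mk_add_mk, Prod.fst_add, Prod.snd_add, Pi.add_apply,
    ← Finset.sum_add_distrib]
  exact Finset.sum_congr rfl fun i _ => by ring

lemma gBr_smul_right (c : ℝ) (x y : Gg n) : gBr n x (c • y) = c • gBr n x y := by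
  show (gl2Br x.1 (c • y.1), phi n x.1 (c • y.2) - phi n (c • y.1) x.2 + heisBr n x.2 (c • y.2))
    = c • (gl2Br x.1 y.1, phi n x.1 y.2 - phi n y.1 x.2 + heisBr n x.2 y.2)
  rw [gl2Br_smul_right, phi_smul_right, phi_smul_left, heisBr_smul_right]
  refine Prod.ext rfl ?_
  show c • phi n x.1 y.2 - c • phi n y.1 x.2 + c • heisBr n x.2 y.2
      = c • (phi n x.1 y.2 - phi n y.1 x.2 + heisBr n x.2 y.2)
  rw [smul_add, smul_sub]
lemma gBr_smul_left (c : ℝ) (x y : Gg n) : gBr n (c • x) y = c • gBr n x y := by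
  show (gl2Br (c • x.1) y.1, phi n (c • x.1) y.2 - phi n y.1 (c • x.2) + heisBr n (c • x.2) y.2)
    = c • (gl2Br x.1 y.1, phi n x.1 y.2 - phi n y.1 x.2 + heisBr n x.2 y.2)
  rw [gl2Br_smul_left, phi_smul_left, phi_smul_right, heisBr_smul_left]
  refine Prod.ext rfl ?_
  show c • phi n x.1 y.2 - c • phi n y.1 x.2 + c • heisBr n x.2 y.2
      = c • (phi n x.1 y.2 - phi n y.1 x.2 + heisBr n x.2 y.2)
  rw [smul_add, smul_sub]
lemma gBr_add_right (x y y' : Gg n) : gBr n x (y + y') = gBr n x y + gBr n x y' := by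
  show (gl2Br x.1 (y.1 + y'.1), phi n x.1 (y.2 + y'.2) - phi n (y.1 + y'.1) x.2
      + heisBr n x.2 (y.2 + y'.2))
    = (gl2Br x.1 y.1, phi n x.1 y.2 - phi n y.1 x.2 + heisBr n x.2 y.2)
      + (gl2Br x.1 y'.1, phi n x.1 y'.2 - phi n y'.1 x.2 + heisBr n x.2 y'.2)
  rw [gl2Br_add_right, phi_add_right, phi_add_left, heisBr_add_right]
  refine Prod.ext rfl ?_
  show phi n x.1 y.2 + phi n x.1 y'.2 - (phi n y.1 x.2 + phi n y'.1 x.2)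
      + (heisBr n x.2 y.2 + heisBr n x.2 y'.2) = _
  show _ = (phi n x.1 y.2 - phi n y.1 x.2 + heisBr n x.2 y.2)
      + (phi n x.1 y'.2 - phi n y'.1 x.2 + heisBr n x.2 y'.2)
  abel
lemma gBr_add_left (x x' y : Gg n) : gBr n (x + x') y = gBr n x y + gBr n x' y := by
  show (gl2Br (x.1 + x'.1) y.1, phi n (x.1 + x'.1) y.2 - phi n y.1 (x.2 + x'.2)
      + heisBr n (x.2 + x'.2) y.2)
    = (gl2Br x.1 y.1, phi n x.1 y.2 - phi n y.1 x.2 + heisBr n x.2 y.2)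
      + (gl2Br x'.1 y.1, phi n x'.1 y.2 - phi n y.1 x'.2 + heisBr n x'.2 y.2)
  rw [gl2Br_add_left, phi_add_left, phi_add_right, heisBr_add_left]
  refine Prod.ext rfl ?_
  show phi n x.1 y.2 + phi n x'.1 y.2 - (phi n y.1 x.2 + phi n y.1 x'.2)
      + (heisBr n x.2 y.2 + heisBr n x'.2 y.2) = _
  show _ = (phi n x.1 y.2 - phi n y.1 x.2 + heisBr n x.2 y.2)
      + (phi n x'.1 y.2 - phi n y.1 x'.2 + heisBr n x'.2 y.2)
  abel

lemma Pm_smul (k : ℕ) (c : ℝ) (x : Gg n) : Pm n k (c • x) = c • Pm n k x := by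
  unfold Pm
  refine Prod.ext (funext fun j => ?_) (Prod.ext (funext fun i => ?_) ?_)
  · fin_cases j <;> simp
  · simp only [Prod.smul_mk, Prod.smul_fst, Prod.smul_snd, Pi.smul_apply, smul_eq_mul]
    split_ifs <;> ring
  · simp
lemma Pm_add (k : ℕ) (x y : Gg n) : Pm n k (x + y) = Pm n k x + Pm n k y := by
  unfold Pm
  refine Prod.ext (funext fun j => ?_) (Prod.ext (funext fun i => ?_) ?_)
  · fin_cases j <;> simp
  · simp only [Prod.mk_add_mk, Prod.fst_add, Prod.snd_add, Pi.add_apply]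
    split_ifs <;> ring
  · simp
lemma Pm_fix (x : Gg n) (h0 : x.1 0 = 0) (h1 : x.1 1 = 0) (h2 : x.1 2 = 0) :
    Pm n (n-4) x = x := by
  unfold Pm
  refine Prod.ext (funext fun j => ?_) (Prod.ext (funext fun i => ?_) rfl)
  · fin_cases j
    · exact h0.symm
    · exact h1.symm
    · exact h2.symm
    · rfl
  · show (if (n:ℤ) - 3 - ((n-4:ℕ):ℤ) ≤ (i.val:ℤ) + 1 then x.2.1 i else 0) = x.2.1 i
    rw [if_pos (by omega)]
lemma Pm_zero (k : ℕ) : Pm n k (0 : Gg n) = 0 := by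
  have := Pm_smul n k 0 0
  simpa using this

end Aux2
section Aux3

variable (n : ℕ)

lemma gBr_X_eps (p : ℕ) (hp : 1 ≤ p) : gBr n (bX n) (bEps n p) = bEps n (p+1) := by
  unfold gBr bX bEps gl2Br phi heisBr epsV
  refine Prod.ext (funext fun j => ?_) (Prod.ext (funext fun i => ?_) ?_)
  · fin_cases j <;> norm_num
  · simp only [Matrix.cons_val]; norm_num
    split_ifs <;> first | rfl | (exfalso; omega)
  · norm_num

lemma gBr_eps_eps (hn : 6 ≤ n) (p q : ℕ) (hp1 : 1 ≤ p) (hp2 : p ≤ 2*n-6)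
    (hq1 : 1 ≤ q) (hq2 : q ≤ 2*n-6) :
    gBr n (bEps n p) (bEps n q) = (if p + q = 2*n-5 then (-1:ℝ)^p else 0) • bEta n := by
  by_cases hc : p + q = 2*n-5
  · rw [if_pos hc]
    unfold gBr bEps bEta gl2Br phi heisBr epsV etaV
    refine Prod.ext (funext fun j => ?_) (Prod.ext (funext fun i => ?_) ?_)
    · fin_cases j <;> norm_num
    · norm_num
    · norm_num
      rw [Finset.sum_eq_single (⟨p-1, by omega⟩ : Fin (2*n-6))]
      · have h1 : ((⟨p-1, by omega⟩ : Fin (2*n-6)).val) + 1 = p := by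
          show p - 1 + 1 = p; omega
        rw [if_pos (show 2*n-6 - (((⟨p-1, by omega⟩ : Fin (2*n-6)).val) + 1) + 1 = q by
          show 2*n-6 - (p-1+1) + 1 = q; omega)]
        rw [if_pos h1, h1]
      · intro b _ hb
        have hb1 : b.val + 1 ≠ p := fun hb1 => hb (Fin.ext (show b.val = p-1 by omega))
        rw [if_neg hb1, ite_self]
      · intro h
        exact absurd (Finset.mem_univ _) h
  · rw [if_neg hc, zero_smul]
    unfold gBr bEps gl2Br phi heisBr epsV
    refine Prod.ext (funext fun j => ?_) (Prod.ext (funext fun i => ?_) ?_)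
    · fin_cases j <;> norm_num
    · norm_num
    · norm_num
      refine Finset.sum_eq_zero fun b _ => ?_
      by_cases hb1 : b.val + 1 = p
      · rw [if_neg (show ¬(2*n-6 - (b.val+1) + 1 = q) by omega)]
      · rw [if_neg hb1, ite_self]

lemma gBr_H_X : gBr n (bH n) (bX n) = (2:ℝ) • bX n := by
  unfold gBr bH bX gl2Br phi heisBr
  refine Prod.ext (funext fun j => ?_) (Prod.ext (funext fun i => ?_) ?_)
  · fin_cases j <;> simp only [Matrix.cons_val] <;> norm_num
  · norm_num
  · norm_num

lemma gBr_H_eps (p : ℕ) (hp : 1 ≤ p) :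
    gBr n (bH n) (bEps n p) = (2*(p:ℝ) + 5 - 2*(n:ℝ)) • bEps n p := by
  unfold gBr bH bEps gl2Br phi heisBr epsV
  refine Prod.ext (funext fun j => ?_) (Prod.ext (funext fun i => ?_) ?_)
  · fin_cases j <;> norm_num
  · simp only [Matrix.cons_val]; norm_num
    by_cases h : i.val + 1 = p
    · rw [if_pos h, if_pos h]
      have hp' : (p:ℝ) = (i.val:ℝ) + 1 := by exact_mod_cast h.symm
      rw [hp']; ring
    · rw [if_neg h, if_neg h]
  · norm_num

lemma gBr_H_eta : gBr n (bH n) (bEta n) = 0 := by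
  unfold gBr bH bEta gl2Br phi heisBr etaV
  refine Prod.ext (funext fun j => ?_) (Prod.ext (funext fun i => ?_) ?_)
  · fin_cases j <;> norm_num
  · norm_num
  · simp only [Matrix.cons_val]; norm_num

lemma gBr_E_X : gBr n (bE n) (bX n) = 0 := by
  unfold gBr bE bX gl2Br phi heisBr
  refine Prod.ext (funext fun j => ?_) (Prod.ext (funext fun i => ?_) ?_)
  · fin_cases j <;> norm_num
  · norm_num
  · norm_num

lemma gBr_E_eps (p : ℕ) : gBr n (bE n) (bEps n p) = bEps n p := by
  unfold gBr bE bEps gl2Br phi heisBr epsV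
  refine Prod.ext (funext fun j => ?_) (Prod.ext (funext fun i => ?_) ?_)
  · fin_cases j <;> norm_num
  · simp only [Matrix.cons_val]; norm_num
  · norm_num

lemma gBr_E_eta : gBr n (bE n) (bEta n) = (2:ℝ) • bEta n := by
  unfold gBr bE bEta gl2Br phi heisBr etaV
  refine Prod.ext (funext fun j => ?_) (Prod.ext (funext fun i => ?_) ?_)
  · fin_cases j <;> norm_num
  · norm_num
  · simp only [Matrix.cons_val]; norm_num

end Aux3
section Aux4

variable (n : ℕ)

lemma mEps_zero (p : ℕ) (hp : 2*n-6 < p) : mEps n p = 0 :=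
  Subtype.ext (bEps_eq_zero n p hp)

lemma mBr_X_eps (p : ℕ) (hp : 1 ≤ p) :
    mBrM n (n-4) (mX n) (mEps n p) = mEps n (p+1) := by
  apply Subtype.ext
  show Pm n (n-4) (gBr n (bX n) (bEps n p)) = bEps n (p+1)
  rw [gBr_X_eps n p hp]
  exact Pm_fix n _ rfl rfl rfl

lemma mBr_eps_eps (hn : 6 ≤ n) (p q : ℕ) (hp1 : 1 ≤ p) (hp2 : p ≤ 2*n-6)
    (hq1 : 1 ≤ q) (hq2 : q ≤ 2*n-6) :
    mBrM n (n-4) (mEps n p) (mEps n q)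
      = (if p + q = 2*n-5 then (-1:ℝ)^p else 0) • mEta n := by
  apply Subtype.ext
  show Pm n (n-4) (gBr n (bEps n p) (bEps n q)) = _
  rw [gBr_eps_eps n hn p q hp1 hp2 hq1 hq2, Pm_smul, Pm_fix n _ rfl rfl rfl]
  rfl

lemma decompM (x : MT n (n-4)) :
    x = (x : Gg n).1 3 • mX n
      + (∑ i : Fin (2*n-6), (x : Gg n).2.1 i • mEps n (i.val+1))
      + (x : Gg n).2.2 • mEta n := by
  obtain ⟨h0, h1, h2, -⟩ := x.2
  apply Subtype.ext
  push_cast [Submodule.coe_add, SetLike.val_smul, AddSubmonoidClass.coe_finset_sum]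
  show (x : Gg n) = (x : Gg n).1 3 • bX n
      + (∑ i : Fin (2*n-6), (x : Gg n).2.1 i • bEps n (i.val+1))
      + (x : Gg n).2.2 • bEta n
  refine Prod.ext (funext fun j => ?_) (Prod.ext (funext fun i => ?_) ?_)
  · simp only [Prod.fst_add, Pi.add_apply, Prod.fst_sum, Finset.sum_apply,
      Prod.smul_fst, Pi.smul_apply, smul_eq_mul, bX, bEps, bEta]
    fin_cases j
    · simpa using h0
    · simpa using h1
    · simpa using h2
    · simp
  · simp only [Prod.snd_add, Prod.fst_add, Pi.add_apply, Prod.snd_sum, Prod.fst_sum,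
      Finset.sum_apply, Prod.smul_snd, Prod.smul_fst, Pi.smul_apply, smul_eq_mul,
      bX, bEps, bEta, epsV, etaV]
    rw [Finset.sum_eq_single i]
    · simp
    · intro b _ hb
      rw [if_neg (fun hc : i.val + 1 = b.val + 1 => hb (Fin.ext (by omega)).symm), mul_zero]
    · intro h; exact absurd (Finset.mem_univ _) h
  · simp only [Prod.snd_add, Prod.snd_sum, Prod.smul_snd, smul_eq_mul, bX, bEps, bEta,
      epsV, etaV]
    simp

end Aux4
/-- with the grading `wght X = -1`, `wght ε_i = -i`, `wght η = 5-2n`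
(the case `k = n-4`), every degree-0 derivation of `m` (a linear map `D : m → m` with
`D(m_p) ⊆ m_p` for every weight `p`, satisfying the Leibniz rule) equals
`a·(ad H)|_m + b·(ad E)|_m` for a unique pair of reals `(a,b)`; in particular the space
of degree-0 derivations of `m` is 2-dimensional. -/
theorem degree_zero_derivations (n : ℕ) (hn : 6 ≤ n)
    (D : MT n (n-4) → MT n (n-4)) (hlin : IsLinM n (n-4) D)
    (hgrade : ∀ w : ℤ, ∀ x : MT n (n-4),
      (x : Gg n) ∈ gComp n (n-4) w → (D x : Gg n) ∈ gComp n (n-4) w)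
    (hleib : ∀ x y, D (mBrM n (n-4) x y) = mBrM n (n-4) (D x) y + mBrM n (n-4) x (D y)) :
    ∃! ab : ℝ × ℝ, ∀ x : MT n (n-4),
      (D x : Gg n) = ab.1 • gBr n (bH n) (x : Gg n) + ab.2 • gBr n (bE n) (x : Gg n) := by
  obtain ⟨hadd, hsmul⟩ := hlin
  have hD0 : D 0 = 0 := by
    have h := hsmul 0 0
    rw [zero_smul, zero_smul] at h
    exact h
  -- coefficients as atoms
  obtain ⟨α, hαx⟩ : ∃ a, (D (mX n) : Gg n).1 3 = a := ⟨_, rfl⟩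
  obtain ⟨β, hβx⟩ : ∃ a, epsCoef n 1 (D (mX n) : Gg n) = a := ⟨_, rfl⟩
  obtain ⟨γ, hγx⟩ : ∃ a, (D (mEps n 1) : Gg n).1 3 = a := ⟨_, rfl⟩
  obtain ⟨δ, hδx⟩ : ∃ a, epsCoef n 1 (D (mEps n 1) : Gg n) = a := ⟨_, rfl⟩
  obtain ⟨eC, heCx⟩ : ∃ a, (D (mEta n) : Gg n).2.2 = a := ⟨_, rfl⟩
  obtain ⟨cc, hccdef⟩ : ∃ f : ℕ → ℝ, ∀ p, epsCoef n p (D (mEps n p) : Gg n) = f p :=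
    ⟨_, fun _ => rfl⟩
  -- decomposition of D X
  have hDX0 : (D (mX n) : Gg n) = α • bX n + β • bEps n 1 := by
    rw [← hαx, ← hβx]
    exact extract_neg1 n hn _ (hgrade (-1) (mX n) (bX_mem n))
  -- decomposition of D ε_p for p ≥ 2
  have hDeps : ∀ p, 2 ≤ p → p ≤ 2*n-6 → (D (mEps n p) : Gg n) = cc p • bEps n p := by
    intro p h2 h6
    rw [← hccdef p]
    exact extract_eps n hn p h2 h6 _
      (hgrade (-(p:ℤ)) (mEps n p) (bEps_mem n hn p (by omega) h6))
  -- decomposition of D ε_1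
  have hD1 : (D (mEps n 1) : Gg n) = γ • bX n + δ • bEps n 1 := by
    rw [← hγx, ← hδx]
    exact extract_neg1 n hn _ (hgrade (-1) (mEps n 1) (bEps_mem n hn 1 (by omega) (by omega)))
  -- decomposition of D η
  have hDeta : (D (mEta n) : Gg n) = eC • bEta n := by
    rw [← heCx]
    exact extract_eta n hn _ (hgrade (5 - 2*(n:ℤ)) (mEta n) (bEta_mem n hn))
  -- step 1 : β = 0
  have hβ0 : β = 0 := by
    have hL := hleib (mX n) (mEps n (2*n-6))
    rw [mBr_X_eps n (2*n-6) (by omega), mEps_zero n (2*n-6+1) (by omega), hD0] at hL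
    have hv := congrArg (Subtype.val) hL
    rw [Submodule.coe_add] at hv
    have e1 : (mBrM n (n-4) (D (mX n)) (mEps n (2*n-6)) : Gg n) = β • ((-1:ℝ) • bEta n) := by
      show Pm n (n-4) (gBr n (D (mX n) : Gg n) (bEps n (2*n-6))) = _
      rw [hDX0, gBr_add_left, gBr_smul_left, gBr_smul_left, gBr_X_eps n (2*n-6) (by omega),
        gBr_eps_eps n hn 1 (2*n-6) (by omega) (by omega) (by omega) (by omega),
        bEps_eq_zero n (2*n-6+1) (by omega), smul_zero, zero_add,
        if_pos (by omega : 1 + (2*n-6) = 2*n-5), pow_one,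
        Pm_smul, Pm_smul, Pm_fix n _ rfl rfl rfl]
    have e2 : (mBrM n (n-4) (mX n) (D (mEps n (2*n-6))) : Gg n) = 0 := by
      show Pm n (n-4) (gBr n (bX n) (D (mEps n (2*n-6)) : Gg n)) = 0
      rw [hDeps (2*n-6) (by omega) (by omega), gBr_smul_right, gBr_X_eps n (2*n-6) (by omega),
        bEps_eq_zero n (2*n-6+1) (by omega), smul_zero, Pm_zero]
    rw [e1, e2, add_zero] at hv
    have h22 := congrArg (fun v : Gg n => v.2.2) hv
    simp [bEta, etaV] at h22
    linarith [h22]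
  rw [hβ0, zero_smul, add_zero] at hDX0
  -- step 2 : γ = 0
  have hγ0 : γ = 0 := by
    have hL := hleib (mEps n 1) (mEps n 2)
    rw [mBr_eps_eps n hn 1 2 (by omega) (by omega) (by omega) (by omega),
      if_neg (by omega), zero_smul, hD0] at hL
    have hv := congrArg (Subtype.val) hL
    rw [Submodule.coe_add] at hv
    have e1 : (mBrM n (n-4) (D (mEps n 1)) (mEps n 2) : Gg n) = γ • bEps n (2+1) := by
      show Pm n (n-4) (gBr n (D (mEps n 1) : Gg n) (bEps n 2)) = _
      rw [hD1, gBr_add_left, gBr_smul_left, gBr_smul_left, gBr_X_eps n 2 (by omega),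
        gBr_eps_eps n hn 1 2 (by omega) (by omega) (by omega) (by omega),
        if_neg (by omega), zero_smul, smul_zero, add_zero, Pm_smul, Pm_fix n _ rfl rfl rfl]
    have e2 : (mBrM n (n-4) (mEps n 1) (D (mEps n 2)) : Gg n) = 0 := by
      show Pm n (n-4) (gBr n (bEps n 1) (D (mEps n 2) : Gg n)) = 0
      rw [hDeps 2 (by omega) (by omega), gBr_smul_right,
        gBr_eps_eps n hn 1 2 (by omega) (by omega) (by omega) (by omega),
        if_neg (by omega), zero_smul, smul_zero, Pm_zero]
    rw [e1, e2, add_zero] at hv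
    have h22 := congrArg (fun v : Gg n => v.2.1 ⟨2, by omega⟩) hv
    simp [bEps, epsV] at h22
    linarith [h22]
  rw [hγ0, zero_smul, zero_add] at hD1
  -- δ = cc 1
  have hcc1 : cc 1 = δ := by
    rw [← hccdef 1, ← hδx]
  -- uniform description of D ε_p
  have hcc : ∀ p, 1 ≤ p → p ≤ 2*n-6 → (D (mEps n p) : Gg n) = cc p • bEps n p := by
    intro p h1 h6
    rcases Nat.lt_or_ge p 2 with h | h
    · have hp1 : p = 1 := by omega
      subst hp1
      rw [hcc1]
      exact hD1
    · exact hDeps p h h6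
  -- recursion
  have hrec : ∀ p, 1 ≤ p → p ≤ 2*n-7 → cc (p+1) = α + cc p := by
    intro p h1 h7
    have hL := hleib (mX n) (mEps n p)
    rw [mBr_X_eps n p h1] at hL
    have hv := congrArg (Subtype.val) hL
    rw [Submodule.coe_add] at hv
    have e1 : (mBrM n (n-4) (D (mX n)) (mEps n p) : Gg n) = α • bEps n (p+1) := by
      show Pm n (n-4) (gBr n (D (mX n) : Gg n) (bEps n p)) = _
      rw [hDX0, gBr_smul_left, gBr_X_eps n p h1, Pm_smul, Pm_fix n _ rfl rfl rfl]
    have e2 : (mBrM n (n-4) (mX n) (D (mEps n p)) : Gg n) = cc p • bEps n (p+1) := by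
      show Pm n (n-4) (gBr n (bX n) (D (mEps n p) : Gg n)) = _
      rw [hcc p h1 (by omega), gBr_smul_right, gBr_X_eps n p h1, Pm_smul,
        Pm_fix n _ rfl rfl rfl]
    rw [e1, e2, hcc (p+1) (by omega) (by omega)] at hv
    have h22 := congrArg (fun v : Gg n => v.2.1 ⟨p, by omega⟩) hv
    simp [bEps, epsV] at h22
    exact h22
  -- closed form
  have hform : ∀ p, 1 ≤ p → p ≤ 2*n-6 → cc p = ((p:ℝ) - 1) * α + cc 1 := by
    have key : ∀ m : ℕ, m + 1 ≤ 2*n-6 → cc (m+1) = (m:ℝ) * α + cc 1 := by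
      intro m
      induction m with
      | zero => intro _; simp
      | succ m ih =>
        intro h
        rw [hrec (m+1) (by omega) (by omega), ih (by omega)]
        push_cast
        ring
    intro p h1 h6
    obtain ⟨m, rfl⟩ : ∃ m, p = m + 1 := ⟨p-1, by omega⟩
    rw [key m h6]
    push_cast
    ring
  -- η coefficient
  have heta : eC = cc 1 + cc (2*n-6) := by
    have hL := hleib (mEps n 1) (mEps n (2*n-6))
    rw [mBr_eps_eps n hn 1 (2*n-6) (by omega) (by omega) (by omega) (by omega),
      if_pos (by omega : 1 + (2*n-6) = 2*n-5), pow_one, hsmul] at hL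
    have hv := congrArg (Subtype.val) hL
    rw [Submodule.coe_add] at hv
    have e1 : (mBrM n (n-4) (D (mEps n 1)) (mEps n (2*n-6)) : Gg n)
        = cc 1 • ((-1:ℝ) • bEta n) := by
      show Pm n (n-4) (gBr n (D (mEps n 1) : Gg n) (bEps n (2*n-6))) = _
      rw [hD1, ← hcc1, gBr_smul_left,
        gBr_eps_eps n hn 1 (2*n-6) (by omega) (by omega) (by omega) (by omega),
        if_pos (by omega : 1 + (2*n-6) = 2*n-5), pow_one, Pm_smul, Pm_smul,
        Pm_fix n _ rfl rfl rfl]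
    have e2 : (mBrM n (n-4) (mEps n 1) (D (mEps n (2*n-6))) : Gg n)
        = cc (2*n-6) • ((-1:ℝ) • bEta n) := by
      show Pm n (n-4) (gBr n (bEps n 1) (D (mEps n (2*n-6)) : Gg n)) = _
      rw [hcc (2*n-6) (by omega) (by omega), gBr_smul_right,
        gBr_eps_eps n hn 1 (2*n-6) (by omega) (by omega) (by omega) (by omega),
        if_pos (by omega : 1 + (2*n-6) = 2*n-5), pow_one, Pm_smul, Pm_smul,
        Pm_fix n _ rfl rfl rfl]
    have e0 : ((((-1:ℝ)) • D (mEta n)) : MT n (n-4)).val = (-1:ℝ) • (D (mEta n) : Gg n) := rfl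
    rw [e0, e1, e2, hDeta] at hv
    have h22 := congrArg (fun v : Gg n => v.2.2) hv
    simp [bEta, etaV] at h22
    linarith [h22]
  -- existence
  have hex : ∀ x : MT n (n-4),
      (D x : Gg n) = (α/2) • gBr n (bH n) (x : Gg n)
        + (cc 1 - (7 - 2*(n:ℝ)) * (α/2)) • gBr n (bE n) (x : Gg n) := by
    have PX : (D (mX n) : Gg n) = (α/2) • gBr n (bH n) (bX n)
        + (cc 1 - (7 - 2*(n:ℝ)) * (α/2)) • gBr n (bE n) (bX n) := by
      rw [gBr_H_X, gBr_E_X, smul_zero, add_zero, hDX0, smul_smul]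
      congr 1
      ring
    have Peps : ∀ p : ℕ, 1 ≤ p → p ≤ 2*n-6 →
        (D (mEps n p) : Gg n) = (α/2) • gBr n (bH n) (bEps n p)
          + (cc 1 - (7 - 2*(n:ℝ)) * (α/2)) • gBr n (bE n) (bEps n p) := by
      intro p h1 h6
      rw [gBr_H_eps n p h1, gBr_E_eps, hcc p h1 h6, hform p h1 h6, smul_smul, ← add_smul]
      congr 1
      ring
    have Peta : (D (mEta n) : Gg n) = (α/2) • gBr n (bH n) (bEta n)
        + (cc 1 - (7 - 2*(n:ℝ)) * (α/2)) • gBr n (bE n) (bEta n) := by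
      rw [gBr_H_eta, gBr_E_eta, smul_zero, zero_add, smul_smul, hDeta, heta,
        hform (2*n-6) (by omega) (by omega)]
      congr 1
      rw [Nat.cast_sub (by omega : 6 ≤ 2*n)]
      push_cast
      ring
    let Dl : MT n (n-4) →ₗ[ℝ] Gg n :=
      { toFun := fun y => (D y : Gg n)
        map_add' := fun y z => by
          show (D (y + z) : Gg n) = (D y : Gg n) + (D z : Gg n)
          rw [hadd]; rfl
        map_smul' := fun c y => by
          show (D (c • y) : Gg n) = c • (D y : Gg n)
          rw [hsmul]; rfl }
    let Rl : MT n (n-4) →ₗ[ℝ] Gg n :=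
      { toFun := fun y => (α/2) • gBr n (bH n) (y : Gg n)
          + (cc 1 - (7 - 2*(n:ℝ)) * (α/2)) • gBr n (bE n) (y : Gg n)
        map_add' := fun y z => by
          simp only [Submodule.coe_add, gBr_add_right, smul_add]
          abel
        map_smul' := fun c y => by
          simp only [SetLike.val_smul, gBr_smul_right, RingHom.id_apply, smul_add]
          rw [smul_comm c (α/2), smul_comm c (cc 1 - (7 - 2*(n:ℝ)) * (α/2))] }
    intro x
    show Dl x = Rl x
    rw [decompM n x]
    simp only [map_add, map_smul, map_sum]
    have hXb : Dl (mX n) = Rl (mX n) := PX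
    have hEtab : Dl (mEta n) = Rl (mEta n) := Peta
    rw [hXb, hEtab, Finset.sum_congr rfl (fun i _ => by
      rw [show Dl (mEps n (i.val+1)) = Rl (mEps n (i.val+1)) from
        Peps (i.val+1) (by omega) (by omega)])]
  refine ⟨(α/2, cc 1 - (7 - 2*(n:ℝ)) * (α/2)), hex, ?_⟩
  rintro ⟨a', b'⟩ hab
  have u1 : a' = α/2 := by
    have h1 := (hab (mX n)).symm.trans (hex (mX n))
    simp only [show ((mX n : MT n (n-4)) : Gg n) = bX n from rfl, gBr_H_X n, gBr_E_X n,
      smul_zero, add_zero, smul_smul] at h1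
    have h2 := congrArg (fun v : Gg n => v.1 3) h1
    simp [bX] at h2
    linarith [h2]
  have u2 : b' = cc 1 - (7 - 2*(n:ℝ)) * (α/2) := by
    have h1 := (hab (mEps n 1)).symm.trans (hex (mEps n 1))
    simp only [show ((mEps n 1 : MT n (n-4)) : Gg n) = bEps n 1 from rfl,
      gBr_H_eps n 1 (by omega), gBr_E_eps n, smul_smul] at h1
    have h2 := congrArg (fun v : Gg n => v.2.1 ⟨0, by omega⟩) h1
    simp [bEps, epsV] at h2
    rw [u1] at h2
    push_cast at h2
    linarith [h2]
  rw [u1, u2]
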